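/- Let m₊, m₋ be the half-line m-functions and define the 2×2 Weyl matrix 𝓜(z) = (m₋(z) − m₊(z))^{−1} · [[1, (m₋(z)+m₊(z))/2], [(m₋(z)+m₊(z))/2, m₋(z)m₊(z)]]. If 𝓜₁, 𝓜₂ are two such matrices built from m_{1,±}, m_{2,±} satisfying m_{j,±}(z) = ±i√z + o(√z) along a ray, and ‖𝓜₁(z) − 𝓜₂(z)‖ = O(e^{−2 Im(√z) a}) along that ray, then |m_{1,+}(z) − m_{2,+}(z)| = O(|z| e^{−2 Im(√z) a}) and |m_{1,−}(z) − m_{2,−}(z)| = O(|z| e^{−2 Im(√z) a}) along the same ray. -/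

import Mathlib

open Complex Real Matrix

attribute [local instance] Matrix.normedAddCommGroup

set_option maxHeartbeats 1600000 in
/-- If the `2×2` Weyl matrices `𝓜_j` built from half-line `m`-functions `m_{j,±}`
(with `m_{j,±}(z) = ±i√z + o(√z)` along the ray `arg z = π − ε`) are exponentially
close, `‖𝓜₁(z) − 𝓜₂(z)‖ = O(e^{−2 Im(√z) a})`, then both
`|m_{j,+}` and `m_{j,-}` differences are `O(|z| e^{−2 Im(√z) a})` along the ray. -/
theorem full_line_weyl_matrix_comparison
    (a : ℝ) (ha : 0 < a) (ε : ℝ) (hε : 0 < ε) (hε' : ε < π / 2)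
    (mp₁ mp₂ mm₁ mm₂ : ℂ → ℂ) (s : ℝ → ℂ)
    (hs : ∀ r > (0:ℝ), (s r) ^ 2 = (r : ℂ) * Complex.exp (I * (π - ε)) ∧ 0 < (s r).im)
    (hne₁ : ∀ z : ℂ, z.im ≠ 0 → mm₁ z - mp₁ z ≠ 0)
    (hne₂ : ∀ z : ℂ, z.im ≠ 0 → mm₂ z - mp₂ z ≠ 0)
    (M₁ M₂ : ℂ → Matrix (Fin 2) (Fin 2) ℂ)
    (hM₁ : ∀ z : ℂ, z.im ≠ 0 → M₁ z = (mm₁ z - mp₁ z)⁻¹ •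
      !![1, (mm₁ z + mp₁ z)/2; (mm₁ z + mp₁ z)/2, mm₁ z * mp₁ z])
    (hM₂ : ∀ z : ℂ, z.im ≠ 0 → M₂ z = (mm₂ z - mp₂ z)⁻¹ •
      !![1, (mm₂ z + mp₂ z)/2; (mm₂ z + mp₂ z)/2, mm₂ z * mp₂ z])
    (hasym : ∀ δ > (0:ℝ), ∃ r₁ : ℝ, ∀ r ≥ r₁, r > 0 →
      ‖mp₁ ((r : ℂ) * Complex.exp (I * (π - ε))) - I * s r‖ ≤ δ * ‖s r‖ ∧
      ‖mp₂ ((r : ℂ) * Complex.exp (I * (π - ε))) - I * s r‖ ≤ δ * ‖s r‖ ∧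
      ‖mm₁ ((r : ℂ) * Complex.exp (I * (π - ε))) + I * s r‖ ≤ δ * ‖s r‖ ∧
      ‖mm₂ ((r : ℂ) * Complex.exp (I * (π - ε))) + I * s r‖ ≤ δ * ‖s r‖)
    (hO : ∃ C > (0:ℝ), ∃ r₂ : ℝ, ∀ r ≥ r₂, r > 0 →
      ‖M₁ ((r : ℂ) * Complex.exp (I * (π - ε)))
        - M₂ ((r : ℂ) * Complex.exp (I * (π - ε)))‖
        ≤ C * Real.exp (-2 * (s r).im * a)) :
    ∃ C > (0:ℝ), ∃ r₀ : ℝ, ∀ r ≥ r₀, r > 0 →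
      ‖mp₁ ((r : ℂ) * Complex.exp (I * (π - ε)))
        - mp₂ ((r : ℂ) * Complex.exp (I * (π - ε)))‖
        ≤ C * r * Real.exp (-2 * (s r).im * a) ∧
      ‖mm₁ ((r : ℂ) * Complex.exp (I * (π - ε)))
        - mm₂ ((r : ℂ) * Complex.exp (I * (π - ε)))‖
        ≤ C * r * Real.exp (-2 * (s r).im * a) := by
  obtain ⟨C, hC, r₂, hr₂⟩ := hO
  obtain ⟨r₁, hr₁⟩ := hasym (1/2) (by norm_num)
  refine ⟨9 * C, by positivity, max (max r₁ r₂) 1, ?_⟩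
  intro r hr hrpos
  have hrr₁ : r ≥ r₁ := le_trans (le_trans (le_max_left r₁ r₂) (le_max_left _ 1)) hr
  have hrr₂ : r ≥ r₂ := le_trans (le_trans (le_max_right r₁ r₂) (le_max_left _ 1)) hr
  have hr1 : (1:ℝ) ≤ r := le_trans (le_max_right _ 1) hr
  obtain ⟨hA₁, hA₂, hA₃, hA₄⟩ := hr₁ r hrr₁ hrpos
  have hMd := hr₂ r hrr₂ hrpos
  obtain ⟨hs2, hsim⟩ := hs r hrpos
  set z : ℂ := (r : ℂ) * Complex.exp (I * (π - ε)) with hz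
  set σ : ℝ := ‖s r‖ with hσ
  set E : ℝ := C * Real.exp (-2 * (s r).im * a) with hE
  clear_value σ E
  have hE0 : 0 < E := by rw [hE]; positivity
  -- z has nonzero imaginary part
  have hzim : z.im ≠ 0 := by
    have h1 : I * ((π:ℂ) - (ε:ℂ)) = ((π - ε : ℝ) : ℂ) * I := by push_cast; ring
    have h2 : (Complex.exp (I * ((π:ℂ) - (ε:ℂ)))).im = Real.sin (π - ε) := by
      rw [h1, Complex.exp_ofReal_mul_I_im]
    have hsin : 0 < Real.sin (π - ε) := by
      apply Real.sin_pos_of_pos_of_lt_pi <;>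
        [linarith [Real.pi_pos]; linarith [Real.pi_pos]]
    have : z.im = r * Real.sin (π - ε) := by
      rw [hz, Complex.mul_im, Complex.ofReal_re, Complex.ofReal_im, h2]; ring
    rw [this]
    exact ne_of_gt (mul_pos hrpos hsin)
  -- ‖s r‖ ^ 2 = r
  have hσsq : σ ^ 2 = r := by
    have h1 : ‖(s r) ^ 2‖ = ‖z‖ := by rw [hs2]
    have h2 : ‖z‖ = r := by
      rw [hz]
      have hre : (I * ((π:ℂ) - (ε:ℂ))).re = 0 := by simp
      rw [norm_mul, Complex.norm_real, Real.norm_eq_abs,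
        Complex.norm_exp, hre, Real.exp_zero, abs_of_pos hrpos, mul_one]
    rw [norm_pow] at h1
    rw [hσ, h1, h2]
  have hσ0 : (0:ℝ) ≤ σ := by rw [hσ]; positivity
  have hσ1 : (1:ℝ) ≤ σ := by nlinarith
  -- abbreviations
  set p₁ := mp₁ z; set p₂ := mp₂ z; set m₁ := mm₁ z; set m₂ := mm₂ z
  have hD₁ne : m₁ - p₁ ≠ 0 := hne₁ z hzim
  have hD₂ne : m₂ - p₂ ≠ 0 := hne₂ z hzim
  have hIs : ‖I * s r‖ = σ := by rw [hσ, norm_mul, Complex.norm_I, one_mul]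
  -- norm bounds on D_j and S_j
  have hD₁ub : ‖m₁ - p₁‖ ≤ 3 * σ := by
    have h : m₁ - p₁ = (m₁ + I * s r) - (p₁ - I * s r) - 2 * (I * s r) := by ring
    rw [h]
    calc ‖(m₁ + I * s r) - (p₁ - I * s r) - 2 * (I * s r)‖
        ≤ ‖(m₁ + I * s r) - (p₁ - I * s r)‖ + ‖2 * (I * s r)‖ := norm_sub_le _ _
      _ ≤ (‖m₁ + I * s r‖ + ‖p₁ - I * s r‖) + ‖2 * (I * s r)‖ := by
          gcongr; exact norm_sub_le _ _
      _ ≤ (1/2 * σ + 1/2 * σ) + 2 * σ := by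
          rw [norm_mul, hIs]; gcongr <;> simp_all <;> norm_num
      _ = 3 * σ := by ring
  have hD₂ub : ‖m₂ - p₂‖ ≤ 3 * σ := by
    have h : m₂ - p₂ = (m₂ + I * s r) - (p₂ - I * s r) - 2 * (I * s r) := by ring
    rw [h]
    calc ‖(m₂ + I * s r) - (p₂ - I * s r) - 2 * (I * s r)‖
        ≤ ‖(m₂ + I * s r) - (p₂ - I * s r)‖ + ‖2 * (I * s r)‖ := norm_sub_le _ _
      _ ≤ (‖m₂ + I * s r‖ + ‖p₂ - I * s r‖) + ‖2 * (I * s r)‖ := by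
          gcongr; exact norm_sub_le _ _
      _ ≤ (1/2 * σ + 1/2 * σ) + 2 * σ := by
          rw [norm_mul, hIs]; gcongr <;> simp_all <;> norm_num
      _ = 3 * σ := by ring
  have hD₁lb : σ ≤ ‖m₁ - p₁‖ := by
    have hw : ‖(m₁ - p₁) + 2 * (I * s r)‖ ≤ σ := by
      have h : (m₁ - p₁) + 2 * (I * s r) = (m₁ + I * s r) - (p₁ - I * s r) := by ring
      rw [h]
      calc ‖(m₁ + I * s r) - (p₁ - I * s r)‖ ≤ ‖m₁ + I * s r‖ + ‖p₁ - I * s r‖ :=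
            norm_sub_le _ _
        _ ≤ 1/2 * σ + 1/2 * σ := by gcongr <;> assumption
        _ = σ := by ring
    have h2 : ‖2 * (I * s r)‖ - ‖(m₁ - p₁) + 2 * (I * s r)‖ ≤ ‖m₁ - p₁‖ := by
      have h := norm_sub_norm_le (2 * (I * s r)) ((m₁ - p₁) + 2 * (I * s r))
      rw [show 2 * (I * s r) - ((m₁ - p₁) + 2 * (I * s r)) = -(m₁ - p₁) by ring, norm_neg] at h
      exact h
    rw [norm_mul, hIs] at h2
    have : ‖(2:ℂ)‖ = 2 := by norm_num
    rw [this] at h2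
    linarith
  have hD₂lb : σ ≤ ‖m₂ - p₂‖ := by
    have hw : ‖(m₂ - p₂) + 2 * (I * s r)‖ ≤ σ := by
      have h : (m₂ - p₂) + 2 * (I * s r) = (m₂ + I * s r) - (p₂ - I * s r) := by ring
      rw [h]
      calc ‖(m₂ + I * s r) - (p₂ - I * s r)‖ ≤ ‖m₂ + I * s r‖ + ‖p₂ - I * s r‖ :=
            norm_sub_le _ _
        _ ≤ 1/2 * σ + 1/2 * σ := by gcongr <;> assumption
        _ = σ := by ring
    have h2 : ‖2 * (I * s r)‖ - ‖(m₂ - p₂) + 2 * (I * s r)‖ ≤ ‖m₂ - p₂‖ := by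
      have h := norm_sub_norm_le (2 * (I * s r)) ((m₂ - p₂) + 2 * (I * s r))
      rw [show 2 * (I * s r) - ((m₂ - p₂) + 2 * (I * s r)) = -(m₂ - p₂) by ring, norm_neg] at h
      exact h
    rw [norm_mul, hIs] at h2
    have : ‖(2:ℂ)‖ = 2 := by norm_num
    rw [this] at h2
    linarith
  have hS₂ub : ‖m₂ + p₂‖ ≤ σ := by
    have h : m₂ + p₂ = (m₂ + I * s r) + (p₂ - I * s r) := by ring
    rw [h]
    calc ‖(m₂ + I * s r) + (p₂ - I * s r)‖ ≤ ‖m₂ + I * s r‖ + ‖p₂ - I * s r‖ :=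
          norm_add_le _ _
      _ ≤ 1/2 * σ + 1/2 * σ := by gcongr <;> assumption
      _ = σ := by ring
  -- matrix entry bounds
  have hMz₁ := hM₁ z hzim
  have hMz₂ := hM₂ z hzim
  have hu : ‖(m₁ - p₁)⁻¹ - (m₂ - p₂)⁻¹‖ ≤ E := by
    have h00 : (M₁ z - M₂ z) 0 0 = (m₁ - p₁)⁻¹ - (m₂ - p₂)⁻¹ := by
      rw [Matrix.sub_apply, hMz₁, hMz₂]; simp; rfl
    calc ‖(m₁ - p₁)⁻¹ - (m₂ - p₂)⁻¹‖ = ‖(M₁ z - M₂ z) 0 0‖ := by rw [h00]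
      _ ≤ ‖M₁ z - M₂ z‖ := Matrix.norm_entry_le_entrywise_sup_norm _
      _ ≤ E := hMd
  have hv : ‖(m₁ - p₁)⁻¹ * ((m₁ + p₁)/2) - (m₂ - p₂)⁻¹ * ((m₂ + p₂)/2)‖ ≤ E := by
    have h01 : (M₁ z - M₂ z) 0 1
        = (m₁ - p₁)⁻¹ * ((m₁ + p₁)/2) - (m₂ - p₂)⁻¹ * ((m₂ + p₂)/2) := by
      rw [Matrix.sub_apply, hMz₁, hMz₂]; simp; rfl
    calc _ = ‖(M₁ z - M₂ z) 0 1‖ := by rw [h01]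
      _ ≤ ‖M₁ z - M₂ z‖ := Matrix.norm_entry_le_entrywise_sup_norm _
      _ ≤ E := hMd
  set u := (m₁ - p₁)⁻¹ - (m₂ - p₂)⁻¹ with hudef
  set v := (m₁ - p₁)⁻¹ * ((m₁ + p₁)/2) - (m₂ - p₂)⁻¹ * ((m₂ + p₂)/2) with hvdef
  -- algebraic identities
  have hidp : p₁ - p₂ = (2 * (m₁ - p₁) * v - (m₂ + p₂) * (m₁ - p₁) * u
      + (m₁ - p₁) * (m₂ - p₂) * u) / 2 := by
    have e₁ : (m₁ - p₁) * (m₁ - p₁)⁻¹ = 1 := mul_inv_cancel₀ hD₁ne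
    have e₂ : (m₂ - p₂) * (m₂ - p₂)⁻¹ = 1 := mul_inv_cancel₀ hD₂ne
    rw [hudef, hvdef]
    linear_combination (-((m₁ + p₁) - (m₂ + p₂) + (m₂ - p₂))/2) * e₁ + ((m₁ - p₁)/2) * e₂
  have hidm : m₁ - m₂ = (2 * (m₁ - p₁) * v - (m₂ + p₂) * (m₁ - p₁) * u
      - (m₁ - p₁) * (m₂ - p₂) * u) / 2 := by
    have e₁ : (m₁ - p₁) * (m₁ - p₁)⁻¹ = 1 := mul_inv_cancel₀ hD₁ne
    have e₂ : (m₂ - p₂) * (m₂ - p₂)⁻¹ = 1 := mul_inv_cancel₀ hD₂ne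
    rw [hudef, hvdef]
    linear_combination (-((m₁ + p₁) - (m₂ + p₂) - (m₂ - p₂))/2) * e₁ + (-(m₁ - p₁)/2) * e₂
  -- final bounds
  have hbound : ∀ w : ℂ, ‖w‖ ≤ 2 * ‖m₁ - p₁‖ * ‖v‖ + ‖m₂ + p₂‖ * ‖m₁ - p₁‖ * ‖u‖
      + ‖m₁ - p₁‖ * ‖m₂ - p₂‖ * ‖u‖ → ‖w / 2‖ ≤ 9 * C * r * Real.exp (-2 * (s r).im * a) := by
    intro w hw
    have h2 : ‖w / 2‖ = ‖w‖ / 2 := by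
      rw [norm_div]; norm_num
    rw [h2]
    have hEeq : 9 * C * r * Real.exp (-2 * (s r).im * a) = 9 * (σ^2) * E := by
      rw [hE, hσsq]; ring
    rw [hEeq]
    have hu0 : (0:ℝ) ≤ ‖u‖ := norm_nonneg _
    have hv0 : (0:ℝ) ≤ ‖v‖ := norm_nonneg _
    have key : 2 * ‖m₁ - p₁‖ * ‖v‖ + ‖m₂ + p₂‖ * ‖m₁ - p₁‖ * ‖u‖
        + ‖m₁ - p₁‖ * ‖m₂ - p₂‖ * ‖u‖ ≤ 2 * (3*σ) * E + σ * (3*σ) * E + (3*σ) * (3*σ) * E := by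
      gcongr <;> first | assumption | positivity | linarith
    have hlast : 2 * (3*σ) * E + σ * (3*σ) * E + (3*σ) * (3*σ) * E ≤ 2 * (9 * (σ^2) * E) := by
      nlinarith [mul_nonneg (sub_nonneg.2 hσ1) hE0.le, hσ0, hE0.le]
    linarith
  constructor
  · rw [hidp]
    apply hbound
    calc ‖2 * (m₁ - p₁) * v - (m₂ + p₂) * (m₁ - p₁) * u + (m₁ - p₁) * (m₂ - p₂) * u‖
        ≤ ‖2 * (m₁ - p₁) * v - (m₂ + p₂) * (m₁ - p₁) * u‖ + ‖(m₁ - p₁) * (m₂ - p₂) * u‖ :=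
          norm_add_le _ _
      _ ≤ (‖2 * (m₁ - p₁) * v‖ + ‖(m₂ + p₂) * (m₁ - p₁) * u‖) + ‖(m₁ - p₁) * (m₂ - p₂) * u‖ := by
          gcongr; exact norm_sub_le _ _
      _ = 2 * ‖m₁ - p₁‖ * ‖v‖ + ‖m₂ + p₂‖ * ‖m₁ - p₁‖ * ‖u‖ + ‖m₁ - p₁‖ * ‖m₂ - p₂‖ * ‖u‖ := by
          simp [norm_mul]
  · rw [hidm]
    apply hbound
    calc ‖2 * (m₁ - p₁) * v - (m₂ + p₂) * (m₁ - p₁) * u - (m₁ - p₁) * (m₂ - p₂) * u‖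
        ≤ ‖2 * (m₁ - p₁) * v - (m₂ + p₂) * (m₁ - p₁) * u‖ + ‖(m₁ - p₁) * (m₂ - p₂) * u‖ :=
          norm_sub_le _ _
      _ ≤ (‖2 * (m₁ - p₁) * v‖ + ‖(m₂ + p₂) * (m₁ - p₁) * u‖) + ‖(m₁ - p₁) * (m₂ - p₂) * u‖ := by
          gcongr; exact norm_sub_le _ _
      _ = 2 * ‖m₁ - p₁‖ * ‖v‖ + ‖m₂ + p₂‖ * ‖m₁ - p₁‖ * ‖u‖ + ‖m₁ - p₁‖ * ‖m₂ - p₂‖ * ‖u‖ := by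
          simp [norm_mul]
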